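/- arXiv:1006.0639 — 6 statements merged into one kernel-verified Lean document; each statement's English description precedes it below -/
import Mathlib

section
/- Let P and Q be orthogonal projections on a complex Hilbert space H and set W = I − P − Q. Then W(P − Q) = −(P − Q)W, and for every real number λ with λ ≠ 1 and λ ≠ −1, the operator W maps the kernel of P − Q − λI bijectively onto the kernel of P − Q + λI; in particular dim Ker(P − Q − λI) = dim Ker(P − Q + λI). -/
/-- Let `P, Q` be orthogonal projections on a complex Hilbert
space and set `W = I - P - Q`. Then `W (P - Q) = -(P - Q) W`, and for every real
`λ ≠ ±1` the operator `W` maps `Ker (P - Q - λ)` bijectively onto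
`Ker (P - Q + λ)`; in particular these kernels have equal dimension. -/
theorem anticommutation_and_kernel_symmetry
    {H : Type*} [NormedAddCommGroup H] [InnerProductSpace ℂ H] [CompleteSpace H]
    (P Q : H →L[ℂ] H)
    (hP : P * P = P) (hP' : IsSelfAdjoint P)
    (hQ : Q * Q = Q) (hQ' : IsSelfAdjoint Q)
    (W : H →L[ℂ] H) (hW : W = 1 - P - Q) :
    W * (P - Q) = -((P - Q) * W) ∧
    ∀ l : ℝ, l ≠ 1 → l ≠ -1 →
      (Set.BijOn W
        (LinearMap.ker ((P - Q - (l : ℂ) • 1 : H →L[ℂ] H) : H →ₗ[ℂ] H) : Set H)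
        (LinearMap.ker ((P - Q + (l : ℂ) • 1 : H →L[ℂ] H) : H →ₗ[ℂ] H) : Set H)) ∧
      Module.rank ℂ (LinearMap.ker ((P - Q - (l : ℂ) • 1 : H →L[ℂ] H) : H →ₗ[ℂ] H)) =
        Module.rank ℂ (LinearMap.ker ((P - Q + (l : ℂ) • 1 : H →L[ℂ] H) : H →ₗ[ℂ] H)) := by
  set A : H →L[ℂ] H := P - Q with hA
  have hanti : W * A = -(A * W) := by
    rw [hW, hA]
    have h1 : (1 - P - Q) * (P - Q)
        = P - Q - (P * P - P * Q) - (Q * P - Q * Q) := by noncomm_ring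
    have h2 : (P - Q) * (1 - P - Q)
        = P - Q - (P * P - Q * P) - (P * Q - Q * Q) := by noncomm_ring
    rw [h1, h2, hP, hQ]; noncomm_ring
  have hkey : W * W + A * A = 1 := by
    rw [hW, hA]
    have h1 : (1 - P - Q) * (1 - P - Q) + (P - Q) * (P - Q)
        = 1 - P - Q - (P - P * P - P * Q) - (Q - Q * P - Q * Q)
          + (P * P - P * Q - (Q * P - Q * Q)) := by noncomm_ring
    rw [h1, hP, hQ]; noncomm_ring
  refine ⟨hanti, ?_⟩
  intro l hl1 hl2
  set c : ℂ := (l : ℂ) with hc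
  have hne : (1 : ℂ) - c ^ 2 ≠ 0 := by
    intro h
    have : (c - 1) * (c + 1) = 0 := by ring_nf; linear_combination -h
    rw [hc] at this
    rcases mul_eq_zero.1 this with h' | h'
    · have : (l : ℂ) = 1 := sub_eq_zero.1 h'
      exact hl1 (by exact_mod_cast this)
    · have : (l : ℂ) = -1 := eq_neg_of_add_eq_zero_left h'
      exact hl2 (by exact_mod_cast this)
  have memiff1 : ∀ x : H, x ∈ LinearMap.ker ((A - c • 1 : H →L[ℂ] H) : H →ₗ[ℂ] H) ↔ A x = c • x := by
    intro x
    simp [LinearMap.mem_ker, ContinuousLinearMap.sub_apply,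
      ContinuousLinearMap.smul_apply, ContinuousLinearMap.one_apply, sub_eq_zero]
  have memiff2 : ∀ x : H, x ∈ LinearMap.ker ((A + c • 1 : H →L[ℂ] H) : H →ₗ[ℂ] H) ↔ A x = -(c • x) := by
    intro x
    simp [LinearMap.mem_ker, ContinuousLinearMap.add_apply,
      ContinuousLinearMap.smul_apply, ContinuousLinearMap.one_apply,
      add_eq_zero_iff_eq_neg]
  have hAW : ∀ x : H, A (W x) = -(W (A x)) := by
    intro x
    have := congrArg (fun T : H →L[ℂ] H => T x) hanti
    simp only [ContinuousLinearMap.mul_apply, ContinuousLinearMap.neg_apply] at this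
    have : W (A x) = -(A (W x)) := this
    rw [this, neg_neg]
  have hmaps : ∀ x : H, x ∈ LinearMap.ker ((A - c • 1 : H →L[ℂ] H) : H →ₗ[ℂ] H) → W x ∈ LinearMap.ker ((A + c • 1 : H →L[ℂ] H) : H →ₗ[ℂ] H) := by
    intro x hx
    rw [memiff1] at hx
    rw [memiff2, hAW, hx, map_smul]
  have hmaps' : ∀ x : H, x ∈ LinearMap.ker ((A + c • 1 : H →L[ℂ] H) : H →ₗ[ℂ] H) → W x ∈ LinearMap.ker ((A - c • 1 : H →L[ℂ] H) : H →ₗ[ℂ] H) := by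
    intro x hx
    rw [memiff2] at hx
    rw [memiff1, hAW, hx]
    simp [map_smul]
  have hWW1 : ∀ x : H, x ∈ LinearMap.ker ((A - c • 1 : H →L[ℂ] H) : H →ₗ[ℂ] H) → W (W x) = (1 - c ^ 2) • x := by
    intro x hx
    rw [memiff1] at hx
    have := congrArg (fun T : H →L[ℂ] H => T x) hkey
    simp only [ContinuousLinearMap.add_apply, ContinuousLinearMap.mul_apply,
      ContinuousLinearMap.one_apply] at this
    have hA2 : A (A x) = (c ^ 2) • x := by
      rw [hx, map_smul, hx, smul_smul]; ring_nf
    rw [hA2] at this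
    rw [eq_sub_of_add_eq this, sub_smul, one_smul]
  have hWW2 : ∀ x : H, x ∈ LinearMap.ker ((A + c • 1 : H →L[ℂ] H) : H →ₗ[ℂ] H) → W (W x) = (1 - c ^ 2) • x := by
    intro x hx
    rw [memiff2] at hx
    have := congrArg (fun T : H →L[ℂ] H => T x) hkey
    simp only [ContinuousLinearMap.add_apply, ContinuousLinearMap.mul_apply,
      ContinuousLinearMap.one_apply] at this
    have hA2 : A (A x) = (c ^ 2) • x := by
      rw [hx, map_neg, map_smul, hx, smul_neg, neg_neg, smul_smul]; ring_nf
    rw [hA2] at this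
    rw [eq_sub_of_add_eq this, sub_smul, one_smul]
  have hbij : Set.BijOn W
      (LinearMap.ker ((A - c • 1 : H →L[ℂ] H) : H →ₗ[ℂ] H) : Set H) (LinearMap.ker ((A + c • 1 : H →L[ℂ] H) : H →ₗ[ℂ] H) : Set H) := by
    refine ⟨fun x hx => hmaps x hx, ?_, ?_⟩
    · intro x hx y hy hxy
      have := congrArg W hxy
      rw [hWW1 x hx, hWW1 y hy] at this
      exact smul_right_injective H hne this
    · intro y hy
      refine ⟨(1 - c ^ 2)⁻¹ • W y, ?_, ?_⟩
      · exact Submodule.smul_mem _ _ (hmaps' y hy)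
      · rw [map_smul, hWW2 y hy, smul_smul, inv_mul_cancel₀ hne, one_smul]
  refine ⟨hbij, ?_⟩
  have hres : ∀ x ∈ LinearMap.ker ((A - c • 1 : H →L[ℂ] H) : H →ₗ[ℂ] H), (W : H →ₗ[ℂ] H) x ∈ LinearMap.ker ((A + c • 1 : H →L[ℂ] H) : H →ₗ[ℂ] H) :=
    fun x hx => hmaps x hx
  let f := (W : H →ₗ[ℂ] H).restrict hres
  have hfbij : Function.Bijective f := by
    constructor
    · intro x y hxy
      apply Subtype.ext
      exact hbij.injOn x.2 y.2 (congrArg Subtype.val hxy)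
    · intro y
      obtain ⟨x, hx, hxy⟩ := hbij.surjOn y.2
      exact ⟨⟨x, hx⟩, Subtype.ext hxy⟩
  exact (LinearEquiv.ofBijective f hfbij).rank_eq
end

section
/- Let P and Q be orthogonal projections on a complex Hilbert space H such that P − Q is compact. Suppose (e_i)_{i∈ι} is a Hilbert basis of H consisting of eigenvectors of P − Q, with (P − Q)e_i = μ_i e_i, and suppose the family (μ_i) is absolutely summable. Then ∑_i μ_i = ind(P, Q) = dim Ker(P − Q − I) − dim Ker(P − Q + I); in particular this sum is an integer. -/
open Module Submodule

section Aux

variable {H : Type*} [NormedAddCommGroup H] [InnerProductSpace ℂ H] [CompleteSpace H]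

omit [CompleteSpace H] in
lemma mem_ker_smul_iff (A : H →L[ℂ] H) (t : ℂ) (x : H) :
    x ∈ LinearMap.ker ((A - t • (1 : H →L[ℂ] H) : H →L[ℂ] H) : H →ₗ[ℂ] H) ↔ A x = t • x := by
  simp [LinearMap.mem_ker, sub_eq_zero]

omit [CompleteSpace H] in
lemma aux_finrank_le (A B : H →L[ℂ] H)
    (hanti : A * B = -(B * A)) (hsq : A * A + B * B = 1)
    {t : ℂ} (ht : t ^ 2 ≠ 1)
    [FiniteDimensional ℂ (LinearMap.ker ((A - (-t) • (1 : H →L[ℂ] H) : H →L[ℂ] H) : H →ₗ[ℂ] H))] :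
    finrank ℂ (LinearMap.ker ((A - t • (1 : H →L[ℂ] H) : H →L[ℂ] H) : H →ₗ[ℂ] H)) ≤
      finrank ℂ (LinearMap.ker ((A - (-t) • (1 : H →L[ℂ] H) : H →L[ℂ] H) : H →ₗ[ℂ] H)) := by
  have hmaps : ∀ x ∈ LinearMap.ker ((A - t • (1 : H →L[ℂ] H) : H →L[ℂ] H) : H →ₗ[ℂ] H),
      B x ∈ LinearMap.ker ((A - (-t) • (1 : H →L[ℂ] H) : H →L[ℂ] H) : H →ₗ[ℂ] H) := by
    intro x hx
    rw [mem_ker_smul_iff] at hx ⊢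
    have h1 : (A * B) x = -((B * A) x) := by rw [hanti]; rfl
    simp only [ContinuousLinearMap.mul_apply] at h1
    rw [h1, hx, map_smul, neg_smul]
  set L := (B : H →ₗ[ℂ] H).restrict hmaps with hL
  have hinj : Function.Injective L := by
    intro x y hxy
    have hBx : B (x : H) = B (y : H) := congrArg Subtype.val hxy
    ext
    have hx := (mem_ker_smul_iff A t x).mp x.2
    have hy := (mem_ker_smul_iff A t y).mp y.2
    have key : ∀ z : H, A z = t • z → (1 - t ^ 2) • z = B (B z) := by
      intro z hz
      have h2 : (A * A + B * B) z = z := by rw [hsq]; rfl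
      simp only [ContinuousLinearMap.add_apply, ContinuousLinearMap.mul_apply] at h2
      have : A (A z) = t • (t • z) := by rw [hz, map_smul, hz]
      rw [this] at h2
      have h3 : B (B z) = z - t ^ 2 • z := by
        rw [smul_smul, ← pow_two] at h2; exact eq_sub_of_add_eq' h2
      rw [sub_smul, one_smul, h3]
    have kx := key x hx
    have ky := key y hy
    rw [hBx] at kx
    have : (1 - t ^ 2) • (x : H) = (1 - t ^ 2) • (y : H) := by rw [kx, ky]
    exact smul_right_injective H (sub_ne_zero.mpr (Ne.symm ht)) this
  exact LinearMap.finrank_le_finrank_of_injective hinj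

lemma ker_eq_span (A : H →L[ℂ] H) (hA : IsSelfAdjoint A)
    {ι : Type*} (e : ι → H) (μ : ι → ℂ) (he : Orthonormal ℂ e)
    (hcompl : (span ℂ (Set.range e)).topologicalClosure = ⊤)
    (heig : ∀ i, A (e i) = μ i • e i)
    (hreal : ∀ i, (starRingEnd ℂ) (μ i) = μ i)
    {t : ℂ} (hJ : {i | μ i = t}.Finite) :
    (LinearMap.ker ((A - t • (1 : H →L[ℂ] H) : H →L[ℂ] H) : H →ₗ[ℂ] H) : Submodule ℂ H)
      = span ℂ (e '' {i | μ i = t}) := by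
  apply le_antisymm
  · intro x hx
    rw [mem_ker_smul_iff] at hx
    have hc0 : ∀ i, μ i ≠ t → (inner ℂ (e i) x : ℂ) = 0 := by
      intro i hi
      have h1 : (inner ℂ (A (e i)) x : ℂ) = μ i * inner ℂ (e i) x := by
        rw [heig, inner_smul_left, hreal]
      have h2 : (inner ℂ (A (e i)) x : ℂ) = t * inner ℂ (e i) x := by
        rw [← hA.adjoint_eq, ContinuousLinearMap.adjoint_inner_left, hx, inner_smul_right]
      have h3 : (μ i - t) * (inner ℂ (e i) x : ℂ) = 0 := by
        rw [sub_mul, h1.symm.trans h2]; ring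
      rcases mul_eq_zero.mp h3 with h | h
      · exact absurd (sub_eq_zero.mp h) hi
      · exact h
    set b : HilbertBasis ι ℂ H := HilbertBasis.mk he (by rw [hcompl])
    have hb : ∀ i, b i = e i := fun i => congrFun (HilbertBasis.coe_mk he _) i
    have hsum : HasSum (fun i => (inner ℂ (e i) x : ℂ) • e i) x := by
      have := b.hasSum_repr x
      simpa [hb, b.repr_apply_apply] using this
    have hsum2 : HasSum (fun i => (inner ℂ (e i) x : ℂ) • e i)
        (∑ i ∈ hJ.toFinset, (inner ℂ (e i) x : ℂ) • e i) := by
      apply hasSum_sum_of_ne_finset_zero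
      intro i hi
      rw [hc0 i (by simpa using hi), zero_smul]
    rw [hsum.unique hsum2]
    apply Submodule.sum_mem
    intro i hi
    exact Submodule.smul_mem _ _ (Submodule.subset_span ⟨i, by simpa using hi, rfl⟩)
  · rw [Submodule.span_le]
    rintro _ ⟨i, hi, rfl⟩
    rw [SetLike.mem_coe, mem_ker_smul_iff, heig, hi]

omit [CompleteSpace H] in
lemma finrank_span_image {ι : Type*} {e : ι → H} (he : Orthonormal ℂ e)
    {s : Set ι} (hs : s.Finite) :
    finrank ℂ (span ℂ (e '' s)) = Nat.card s := by
  haveI := hs.fintype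
  rw [Set.image_eq_range]
  exact (finrank_span_eq_card
    ((he.comp _ Subtype.val_injective).linearIndependent)).trans
    Nat.card_eq_fintype_card.symm

end Aux

/-- Let `P, Q` be orthogonal projections on a complex Hilbert
space with `P - Q` compact. If `(e i)` is a complete orthonormal family of
eigenvectors of `P - Q`, `(P - Q) (e i) = μ i • e i`, and `(μ i)` is absolutely
summable, then `∑ μ i = ind (P, Q) = dim Ker (P - Q - I) - dim Ker (P - Q + I)`;
in particular the sum is an integer. -/
theorem tsum_eigenvalues_eq_index
    {H : Type*} [NormedAddCommGroup H] [InnerProductSpace ℂ H] [CompleteSpace H]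
    (P Q : H →L[ℂ] H)
    (hP : P * P = P) (hP' : IsSelfAdjoint P)
    (hQ : Q * Q = Q) (hQ' : IsSelfAdjoint Q)
    (hcomp : IsCompactOperator ⇑(P - Q))
    {ι : Type*} (e : ι → H) (μ : ι → ℂ)
    (he : Orthonormal ℂ e)
    (hcompl : (Submodule.span ℂ (Set.range e)).topologicalClosure = ⊤)
    (heig : ∀ i, (P - Q) (e i) = μ i • e i)
    (hsum : Summable fun i => ‖μ i‖) :
    ∑' i, μ i =
      (((Module.finrank ℂ (LinearMap.ker ((P - Q - 1 : H →L[ℂ] H) : H →ₗ[ℂ] H)) : ℤ) -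
        (Module.finrank ℂ (LinearMap.ker ((P - Q + 1 : H →L[ℂ] H) : H →ₗ[ℂ] H)) : ℤ) : ℤ) : ℂ) := by
  classical
  set A : H →L[ℂ] H := P - Q with hAdef
  set B : H →L[ℂ] H := 1 - P - Q with hBdef
  have hA' : IsSelfAdjoint A := hP'.sub hQ'
  have hanti : A * B = -(B * A) := by
    rw [hAdef, hBdef]; noncomm_ring; rw [hP, hQ]; abel
  have hsq : A * A + B * B = 1 := by
    rw [hAdef, hBdef]; noncomm_ring; rw [hP, hQ]; abel
  -- realness of eigenvalues
  have hreal : ∀ i, (starRingEnd ℂ) (μ i) = μ i := by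
    intro i
    have hni : (inner ℂ (e i) (e i) : ℂ) = 1 := by
      simpa using orthonormal_iff_ite.mp he i i
    have hμi : (inner ℂ (e i) (A (e i)) : ℂ) = μ i := by
      rw [heig, inner_smul_right, hni, mul_one]
    calc (starRingEnd ℂ) (μ i) = (starRingEnd ℂ) (inner ℂ (e i) (A (e i)) : ℂ) := by rw [hμi]
      _ = (inner ℂ (A (e i)) (e i) : ℂ) := by rw [inner_conj_symm]
      _ = (inner ℂ (e i) (A (e i)) : ℂ) := by
          rw [← ContinuousLinearMap.adjoint_inner_left, hA'.adjoint_eq]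
      _ = μ i := hμi
  -- finiteness of eigenvalue fibers
  have hμsum : Summable μ := hsum.of_norm
  have hfin : ∀ t : ℂ, t ≠ 0 → {i | μ i = t}.Finite := by
    intro t ht
    have h1 : ∀ᶠ i in Filter.cofinite, μ i ≠ t :=
      hμsum.tendsto_cofinite_zero.eventually (eventually_ne_nhds (Ne.symm ht) : _)
    simpa [Filter.eventually_cofinite] using h1
  -- dimension of eigenspaces
  have hker : ∀ t : ℂ, t ≠ 0 →
      (LinearMap.ker ((A - t • (1 : H →L[ℂ] H) : H →L[ℂ] H) : H →ₗ[ℂ] H) : Submodule ℂ H)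
        = span ℂ (e '' {i | μ i = t}) := fun t ht =>
    ker_eq_span A hA' e μ he hcompl heig hreal (hfin t ht)
  have hfd : ∀ t : ℂ, t ≠ 0 →
      FiniteDimensional ℂ (LinearMap.ker ((A - t • (1 : H →L[ℂ] H) : H →L[ℂ] H) : H →ₗ[ℂ] H)) := by
    intro t ht
    rw [hker t ht]
    exact FiniteDimensional.span_of_finite ℂ ((hfin t ht).image e)
  have hcard : ∀ t : ℂ, t ≠ 0 →
      finrank ℂ (LinearMap.ker ((A - t • (1 : H →L[ℂ] H) : H →L[ℂ] H) : H →ₗ[ℂ] H)) = Nat.card {i | μ i = t} := by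
    intro t ht
    rw [hker t ht, finrank_span_image he (hfin t ht)]
  -- symmetry of the spectrum away from 0, 1, -1
  have hsymm : ∀ t : ℂ, t ≠ 0 → t ≠ 1 → t ≠ -1 →
      Nat.card {i | μ i = t} = Nat.card {i | μ i = -t} := by
    intro t ht h1 hm1
    have ht2 : t ^ 2 ≠ 1 := by
      intro h
      have : (t - 1) * (t + 1) = 0 := by linear_combination h
      rcases mul_eq_zero.mp this with h' | h'
      · exact h1 (sub_eq_zero.mp h')
      · exact hm1 (eq_neg_of_add_eq_zero_left h')
    have ht2' : (-t) ^ 2 ≠ 1 := by rwa [neg_sq]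
    haveI := hfd t ht
    haveI := hfd (-t) (neg_ne_zero.mpr ht)
    haveI := hfd (-(-t)) (neg_ne_zero.mpr (neg_ne_zero.mpr ht))
    have le1 := aux_finrank_le A B hanti hsq ht2
    have le2 := aux_finrank_le A B hanti hsq ht2'
    rw [neg_neg] at le2
    rw [← hcard t ht, ← hcard (-t) (neg_ne_zero.mpr ht)]
    exact le_antisymm le1 le2
  -- the set of indices with eigenvalue ±1
  set S : Set ι := {i | μ i = 1} ∪ {i | μ i = -1} with hSdef
  have hS1 : {i | μ i = (1:ℂ)}.Finite := hfin 1 one_ne_zero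
  have hSm1 : {i | μ i = (-1:ℂ)}.Finite := hfin (-1) (by norm_num)
  have hS : S.Finite := hS1.union hSm1
  -- the involution on the complement
  have hA0 : ∑' (j : ↥Sᶜ), μ (j : ι) = 0 := by
    set ν : ↥Sᶜ → ℂ := fun j => μ (j : ι) with hνdef
    have hmem : ∀ j : ↥Sᶜ, μ (j : ι) ≠ 1 ∧ μ (j : ι) ≠ -1 := by
      intro j
      have := j.2
      simp only [hSdef, Set.mem_compl_iff, Set.mem_union, Set.mem_setOf_eq, not_or] at this
      exact this
    -- fiber equivalences
    have G : ∀ t : ℂ, t ≠ 1 → t ≠ -1 →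
        ({j : ↥Sᶜ // ν j = t} ≃ {i : ι // μ i = t}) := by
      intro t h1 hm1
      exact
        { toFun := fun j => ⟨(j.1 : ι), j.2⟩
          invFun := fun i => ⟨⟨i.1, by
            simp only [hSdef, Set.mem_compl_iff, Set.mem_union, Set.mem_setOf_eq, not_or]
            exact ⟨by rw [i.2]; exact h1, by rw [i.2]; exact hm1⟩⟩, i.2⟩
          left_inv := fun j => by ext; rfl
          right_inv := fun i => by ext; rfl }
    have equivFib : ∀ t : ℂ, {j : ↥Sᶜ // ν j = t} ≃ {j : ↥Sᶜ // ν j = -t} := by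
      intro t
      by_cases h0 : t = 0
      · exact Equiv.subtypeEquivRight (fun j => by rw [h0, neg_zero])
      by_cases h1 : t = 1
      · haveI : IsEmpty {j : ↥Sᶜ // ν j = t} :=
          ⟨fun j => (hmem j.1).1 (by rw [← h1]; exact j.2)⟩
        haveI : IsEmpty {j : ↥Sᶜ // ν j = -t} :=
          ⟨fun j => (hmem j.1).2 (by rw [← h1]; exact j.2)⟩
        exact Equiv.equivOfIsEmpty _ _
      by_cases hm1 : t = -1
      · haveI : IsEmpty {j : ↥Sᶜ // ν j = t} :=
          ⟨fun j => (hmem j.1).2 (by rw [← hm1]; exact j.2)⟩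
        haveI : IsEmpty {j : ↥Sᶜ // ν j = -t} :=
          ⟨fun j => (hmem j.1).1 (j.2.trans (by rw [hm1, neg_neg]))⟩
        exact Equiv.equivOfIsEmpty _ _
      · -- generic case
        have hmt1 : -t ≠ 1 := fun h => hm1 (by rw [← neg_neg t, h])
        have hmtm1 : -t ≠ -1 := fun h => h1 (neg_injective h)
        haveI : Finite {i : ι // μ i = t} := (hfin t h0).to_subtype
        haveI : Finite {i : ι // μ i = -t} := (hfin (-t) (neg_ne_zero.mpr h0)).to_subtype
        have hc : Nat.card {i : ι // μ i = t} = Nat.card {i : ι // μ i = -t} :=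
          hsymm t h0 h1 hm1
        exact ((G t h1 hm1).trans (Finite.card_eq.mp hc).some).trans (G (-t) hmt1 hmtm1).symm
    set Φ : ↥Sᶜ ≃ ↥Sᶜ :=
      ((Equiv.sigmaFiberEquiv ν).symm.trans
        ((Equiv.sigmaCongr (Equiv.neg ℂ) equivFib).trans (Equiv.sigmaFiberEquiv ν))) with hΦdef
    have hΦ : ∀ j, ν (Φ j) = -ν j := by
      intro j
      have : Φ j = ((equivFib (ν j)) ⟨j, rfl⟩).1 := rfl
      rw [this]
      exact ((equivFib (ν j)) ⟨j, rfl⟩).2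
    have hνsum : Summable ν := hμsum.subtype _
    have h2 : ∑' j, ν j = -∑' j, ν j := by
      calc ∑' j, ν j = ∑' j, ν (Φ j) := (Φ.tsum_eq ν).symm
        _ = ∑' j, -ν j := tsum_congr hΦ
        _ = -∑' j, ν j := tsum_neg
    linear_combination h2 / 2
  -- the sum over S
  have hBsum : ∑' (i : ↥S), μ (i : ι) =
      (Nat.card {i | μ i = (1:ℂ)} : ℂ) - (Nat.card {i | μ i = (-1:ℂ)} : ℂ) := by
    rw [tsum_subtype]
    rw [tsum_eq_sum (s := hS.toFinset)
      (by intro i hi; exact Set.indicator_of_notMem (by simpa using hi) μ)]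
    have hdisj : Disjoint hS1.toFinset hSm1.toFinset := by
      rw [Finset.disjoint_left]
      intro a ha hb
      have h1 : μ a = 1 := by simpa using ha
      have h2 : μ a = -1 := by simpa using hb
      rw [h1] at h2; norm_num at h2
    rw [Set.Finite.toFinset_union hS1 hSm1 hS, Finset.sum_union hdisj]
    have e1 : ∑ i ∈ hS1.toFinset, S.indicator μ i = (hS1.toFinset.card : ℂ) := by
      rw [Finset.sum_congr rfl (fun i hi => ?_), Finset.sum_const, nsmul_eq_mul, mul_one]
      have h1 : μ i = 1 := by simpa using hi
      rw [Set.indicator_of_mem (by exact Or.inl h1) μ, h1]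
    have e2 : ∑ i ∈ hSm1.toFinset, S.indicator μ i = -(hSm1.toFinset.card : ℂ) := by
      rw [Finset.sum_congr rfl (fun i hi => ?_) (g := fun _ => (-1 : ℂ)), Finset.sum_const,
        nsmul_eq_mul, mul_neg_one]
      have h1 : μ i = -1 := by simpa using hi
      rw [Set.indicator_of_mem (by exact Or.inr h1) μ, h1]
    rw [e1, e2]
    have c1 : Nat.card {i | μ i = (1:ℂ)} = hS1.toFinset.card := by
      rw [Nat.card_coe_set_eq, Set.ncard_eq_toFinset_card _ hS1]
    have c2 : Nat.card {i | μ i = (-1:ℂ)} = hSm1.toFinset.card := by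
      rw [Nat.card_coe_set_eq, Set.ncard_eq_toFinset_card _ hSm1]
    rw [c1, c2]; ring
  -- identify the kernels in the goal
  have k1 : P - Q - 1 = A - (1 : ℂ) • (1 : H →L[ℂ] H) := by rw [one_smul]
  have k2 : P - Q + 1 = A - (-1 : ℂ) • (1 : H →L[ℂ] H) := by
    rw [neg_smul, one_smul, sub_neg_eq_add]
  have d1 : finrank ℂ (LinearMap.ker ((P - Q - 1 : H →L[ℂ] H) : H →ₗ[ℂ] H)) = Nat.card {i | μ i = (1:ℂ)} := by
    rw [k1]; exact hcard 1 one_ne_zero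
  have d2 : finrank ℂ (LinearMap.ker ((P - Q + 1 : H →L[ℂ] H) : H →ₗ[ℂ] H)) = Nat.card {i | μ i = (-1:ℂ)} := by
    rw [k2]; exact hcard (-1) (by norm_num)
  -- put everything together
  have hsplit := hμsum.tsum_subtype_add_tsum_subtype_compl S
  rw [hA0, add_zero] at hsplit
  rw [← hsplit, hBsum, d1, d2]
  push_cast
  ring
end

section
/- Let P and Q be orthogonal projections on a complex Hilbert space H such that P − Q is compact, and let T : Ran P → Ran Q be the restriction of QP, i.e. T x = Q x for x ∈ Ran P. Then the kernel of T equals Ker(P − Q − I), the range of T is closed in Ran Q, the orthogonal complement of Ran T within Ran Q equals Ker(P − Q + I), and consequently T is a Fredholm operator whose index dim Ker T − dim Coker T equals ind(P, Q) = dim Ker(P − Q − I) − dim Ker(P − Q + I). -/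
local notation "⟪" x ", " y "⟫" => @inner ℂ _ _ x y

open ContinuousLinearMap in
/-- Eigenvector characterization at +1 for a difference of orthogonal projections. -/
lemma aux_eig_char {H : Type*} [NormedAddCommGroup H] [InnerProductSpace ℂ H] [CompleteSpace H]
    (P Q : H →L[ℂ] H)
    (hP : P * P = P) (hP' : IsSelfAdjoint P)
    (hQ : Q * Q = Q) (hQ' : IsSelfAdjoint Q) (x : H) :
    (P - Q) x = x ↔ P x = x ∧ Q x = 0 := by
  constructor
  · intro h
    have hPadj : ContinuousLinearMap.adjoint P = P := by
      rw [← ContinuousLinearMap.star_eq_adjoint]; exact hP'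
    have hQadj : ContinuousLinearMap.adjoint Q = Q := by
      rw [← ContinuousLinearMap.star_eq_adjoint]; exact hQ'
    have hPx : ⟪x, P x⟫ = ((‖P x‖ : ℂ) ^ 2) := by
      have h1 : P (P x) = P x := by rw [← ContinuousLinearMap.mul_apply, hP]
      calc ⟪x, P x⟫ = ⟪x, P (P x)⟫ := by rw [h1]
        _ = ⟪ContinuousLinearMap.adjoint P x, P x⟫ :=
          (ContinuousLinearMap.adjoint_inner_left P (P x) x).symm
        _ = ⟪P x, P x⟫ := by rw [hPadj]
        _ = ((‖P x‖ : ℂ) ^ 2) := inner_self_eq_norm_sq_to_K (P x)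
    have hQx : ⟪x, Q x⟫ = ((‖Q x‖ : ℂ) ^ 2) := by
      have h1 : Q (Q x) = Q x := by rw [← ContinuousLinearMap.mul_apply, hQ]
      calc ⟪x, Q x⟫ = ⟪x, Q (Q x)⟫ := by rw [h1]
        _ = ⟪ContinuousLinearMap.adjoint Q x, Q x⟫ :=
          (ContinuousLinearMap.adjoint_inner_left Q (Q x) x).symm
        _ = ⟪Q x, Q x⟫ := by rw [hQadj]
        _ = ((‖Q x‖ : ℂ) ^ 2) := inner_self_eq_norm_sq_to_K (Q x)
    have hsub : (P - Q) x = P x - Q x := by simp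
    have key : (‖x‖ : ℂ) ^ 2 = (‖P x‖ : ℂ) ^ 2 - (‖Q x‖ : ℂ) ^ 2 := by
      have h5 : ⟪x, P x - Q x⟫ = ⟪x, x⟫ := by rw [← hsub, h]
      rw [inner_sub_right, hPx, hQx, inner_self_eq_norm_sq_to_K] at h5
      exact h5.symm
    have keyR : (‖x‖ : ℝ) ^ 2 = ‖P x‖ ^ 2 - ‖Q x‖ ^ 2 := by
      exact_mod_cast key
    have hre : RCLike.re ⟪x, P x⟫ = ‖P x‖ ^ 2 := by
      rw [hPx]
      norm_cast
    have h2 : ‖x - P x‖ ^ 2 = ‖x‖ ^ 2 - ‖P x‖ ^ 2 := by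
      rw [@norm_sub_sq ℂ, hre]; ring
    have hsum : ‖x - P x‖ ^ 2 + ‖Q x‖ ^ 2 = 0 := by rw [h2, keyR]; ring
    have h3 : ‖x - P x‖ = 0 ∧ ‖Q x‖ = 0 := by
      constructor <;> nlinarith [sq_nonneg ‖x - P x‖, sq_nonneg ‖Q x‖, norm_nonneg (x - P x),
        norm_nonneg (Q x)]
    refine ⟨?_, ?_⟩
    · have h4 := norm_eq_zero.mp h3.1
      have := sub_eq_zero.mp h4
      exact this.symm
    · exact norm_eq_zero.mp h3.2
  · rintro ⟨h1, h2⟩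
    simp [h1, h2]


lemma aux_findim_ker {H : Type*} [NormedAddCommGroup H] [NormedSpace ℂ H]
    (f : H →L[ℂ] H) (hf : IsCompactOperator ⇑f) :
    FiniteDimensional ℂ (LinearMap.ker ((f - 1 : H →L[ℂ] H) : H →ₗ[ℂ] H)) := by
  -- the set ker ∩ closed ball is compact in H
  set M : Submodule ℂ H := LinearMap.ker ((f - 1 : H →L[ℂ] H) : H →ₗ[ℂ] H) with hM
  have hmem : ∀ x : H, x ∈ M ↔ f x = x := by
    intro x
    simp [hM, LinearMap.mem_ker, sub_eq_zero]
  obtain ⟨K, hK, hKsub⟩ :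
      ∃ K : Set H, IsCompact K ∧ ⇑f '' Metric.closedBall 0 1 ⊆ K := by
    have : IsCompactOperator ⇑(f : H →ₗ[ℂ] H) := hf
    exact this.image_closedBall_subset_compact 1
  have hsetcpt : IsCompact ((M : Set H) ∩ Metric.closedBall 0 1) := by
    apply hK.of_isClosed_subset
    · exact IsClosed.inter (ContinuousLinearMap.isClosed_ker (f - 1)) Metric.isClosed_closedBall
    · rintro x ⟨hx1, hx2⟩
      have : f x = x := (hmem x).mp hx1
      exact hKsub ⟨x, hx2, this⟩
  -- transfer to the subtype
  have hcpt2 : IsCompact (Metric.closedBall (0 : M) 1) := by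
    rw [Topology.IsInducing.subtypeVal.isCompact_iff]
    convert hsetcpt using 1
    ext x
    simp only [Set.mem_image, Metric.mem_closedBall, Set.mem_inter_iff, SetLike.mem_coe]
    constructor
    · rintro ⟨y, hy, rfl⟩
      refine ⟨y.2, ?_⟩
      simpa [dist_eq_norm] using hy
    · rintro ⟨h1, h2⟩
      refine ⟨⟨x, h1⟩, ?_, rfl⟩
      simpa [dist_eq_norm, Submodule.coe_norm] using h2
  exact FiniteDimensional.of_isCompact_closedBall ℂ one_pos hcpt2



open Filter Topology

lemma aux_bounded_below {H : Type*} [NormedAddCommGroup H] [InnerProductSpace ℂ H]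
    [CompleteSpace H] (P Q : H →L[ℂ] H) (hcomp : IsCompactOperator ⇑(P - Q))
    (M : Submodule ℂ H) (hMdef : ∀ x, x ∈ M ↔ (P - Q) x = x) :
    ∃ c : ℝ, 0 < c ∧ ∀ x : H, P x = x → x ∈ Mᗮ → c * ‖x‖ ≤ ‖Q x‖ := by
  by_contra hcon
  push_neg at hcon
  -- construct a sequence of unit vectors
  have hseq : ∀ n : ℕ, ∃ u : H, P u = u ∧ u ∈ Mᗮ ∧ ‖u‖ = 1 ∧ ‖Q u‖ < 1 / (n + 1 : ℝ) := by
    intro n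
    obtain ⟨x, hx1, hx2, hx3⟩ := hcon (1 / (n + 1 : ℝ)) (by positivity)
    have hxne : x ≠ 0 := by
      rintro rfl
      simp at hx3
    have hxpos : (0 : ℝ) < ‖x‖ := norm_pos_iff.mpr hxne
    refine ⟨((‖x‖⁻¹ : ℝ) : ℂ) • x, ?_, ?_, ?_, ?_⟩
    · rw [map_smul, hx1]
    · exact Submodule.smul_mem _ _ hx2
    · rw [norm_smul]
      simp [abs_of_pos hxpos, inv_mul_cancel₀ hxpos.ne']
    · rw [map_smul, norm_smul]
      have : ‖((‖x‖⁻¹ : ℝ) : ℂ)‖ = ‖x‖⁻¹ := by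
        simp [abs_of_pos hxpos]
      rw [this]
      calc ‖x‖⁻¹ * ‖Q x‖ < ‖x‖⁻¹ * (1 / (n + 1 : ℝ) * ‖x‖) := by
            apply mul_lt_mul_of_pos_left hx3 (by positivity)
        _ = 1 / (n + 1 : ℝ) := by field_simp
  choose u hu1 hu2 hu3 hu4 using hseq
  -- compactness
  obtain ⟨K, hK, hKnhds⟩ := hcomp
  obtain ⟨r, hr, hball⟩ := Metric.mem_nhds_iff.mp hKnhds
  set g : ℕ → H := fun n => (P - Q) (((r / 2 : ℝ) : ℂ) • u n) with hg
  have hgK : ∀ n, g n ∈ K := by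
    intro n
    apply hball
    rw [Metric.mem_ball, dist_zero_right, norm_smul, hu3]
    simp only [mul_one]
    rw [Complex.norm_real, Real.norm_eq_abs, abs_of_pos (by positivity)]
    linarith
  obtain ⟨a, _, φ, hφ, hlim⟩ := hK.tendsto_subseq hgK
  -- the limit y
  set y : H := ((2 / r : ℝ) : ℂ) • a with hy
  have hbnd : ∀ n : ℕ, ‖Q (u (φ n))‖ ≤ 1 / (n + 1 : ℝ) := by
    intro n
    have h1 : ‖Q (u (φ n))‖ < 1 / (φ n + 1 : ℝ) := hu4 (φ n)
    have h2 : (1 : ℝ) / (φ n + 1) ≤ 1 / (n + 1) := by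
      apply one_div_le_one_div_of_le (by positivity)
      have hn : n ≤ φ n := hφ.le_apply
      have hn' : (n : ℝ) ≤ (φ n : ℝ) := by exact_mod_cast hn
      linarith
    linarith
  have hQlim0 : Tendsto (fun n => Q (u (φ n))) atTop (𝓝 0) :=
    squeeze_zero_norm hbnd tendsto_one_div_add_atTop_nhds_zero_nat
  have hulim : Tendsto (fun n => u (φ n)) atTop (𝓝 y) := by
    have heq : ∀ n, u (φ n) = Q (u (φ n)) + ((2 / r : ℝ) : ℂ) • g (φ n) := by
      intro n
      rw [hg]
      simp only [map_smul, ContinuousLinearMap.sub_apply]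
      rw [hu1, smul_smul]
      have h12 : (((2 / r : ℝ) : ℂ)) * (((r / 2 : ℝ) : ℂ)) = 1 := by
        norm_cast
        field_simp
      rw [h12, one_smul]
      abel
    have hQlim := hQlim0
    have h2 : Tendsto (fun n => ((2 / r : ℝ) : ℂ) • g (φ n)) atTop (𝓝 y) := by
      rw [hy]
      exact hlim.const_smul _
    have := hQlim.add h2
    rw [zero_add] at this
    exact this.congr (fun n => (heq n).symm)
  have hynorm : ‖y‖ = 1 := by
    have h1 : Tendsto (fun n => ‖u (φ n)‖) atTop (𝓝 ‖y‖) := hulim.norm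
    have h2 : Tendsto (fun n => ‖u (φ n)‖) atTop (𝓝 1) := by
      simp only [hu3]
      exact tendsto_const_nhds
    exact tendsto_nhds_unique h1 h2
  have hPy : P y = y := by
    have h1 : Tendsto (fun n => P (u (φ n))) atTop (𝓝 (P y)) := (P.continuous.tendsto y).comp hulim
    have h2 : Tendsto (fun n => P (u (φ n))) atTop (𝓝 y) := by
      simp only [hu1]; exact hulim
    exact tendsto_nhds_unique h1 h2
  have hQy : Q y = 0 := by
    have h1 : Tendsto (fun n => Q (u (φ n))) atTop (𝓝 (Q y)) := (Q.continuous.tendsto y).comp hulim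
    have h2 := hQlim0
    exact tendsto_nhds_unique h1 h2
  have hyMo : y ∈ Mᗮ := by
    have : IsClosed (Mᗮ : Set H) := Submodule.isClosed_orthogonal M
    exact this.mem_of_tendsto hulim (Filter.Eventually.of_forall (fun n => hu2 (φ n)))
  have hyM : y ∈ M := by
    rw [hMdef]
    simp [hPy, hQy]
  have : y = 0 := by
    have := (Submodule.mem_orthogonal M y).mp hyMo y hyM
    exact inner_self_eq_zero.mp this
  rw [this, norm_zero] at hynorm
  exact zero_ne_one hynorm



set_option maxHeartbeats 1000000 in
/-- Let `P, Q` be orthogonal projections on a complex Hilbert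
space with `P - Q` compact, and let `T : Ran P → Ran Q` be the restriction of
`QP`. Then `Ker T = Ker (P - Q - I)`, `Ran T` is closed in `Ran Q`, the
orthogonal complement of `Ran T` within `Ran Q` equals `Ker (P - Q + I)`, and
`T` is Fredholm with index `ind (P, Q)`. -/
theorem restriction_QP_fredholm_index
    {H : Type*} [NormedAddCommGroup H] [InnerProductSpace ℂ H] [CompleteSpace H]
    (P Q : H →L[ℂ] H)
    (hP : P * P = P) (hP' : IsSelfAdjoint P)
    (hQ : Q * Q = Q) (hQ' : IsSelfAdjoint Q)
    (hcomp : IsCompactOperator ⇑(P - Q))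
    (T : LinearMap.range (P : H →ₗ[ℂ] H) →L[ℂ] LinearMap.range (Q : H →ₗ[ℂ] H))
    (hT : ∀ x : LinearMap.range (P : H →ₗ[ℂ] H), (T x : H) = Q x) :
    (LinearMap.ker (T : LinearMap.range (P : H →ₗ[ℂ] H) →ₗ[ℂ] LinearMap.range (Q : H →ₗ[ℂ] H))).map (LinearMap.range (P : H →ₗ[ℂ] H)).subtype = LinearMap.ker ((P - Q - 1 : H →L[ℂ] H) : H →ₗ[ℂ] H) ∧
    IsClosed ((LinearMap.range (T : LinearMap.range (P : H →ₗ[ℂ] H) →ₗ[ℂ] LinearMap.range (Q : H →ₗ[ℂ] H)) : Submodule ℂ (LinearMap.range (Q : H →ₗ[ℂ] H))) :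
      Set (LinearMap.range (Q : H →ₗ[ℂ] H))) ∧
    ((LinearMap.range (T : LinearMap.range (P : H →ₗ[ℂ] H) →ₗ[ℂ] LinearMap.range (Q : H →ₗ[ℂ] H)))ᗮ).map (LinearMap.range (Q : H →ₗ[ℂ] H)).subtype = LinearMap.ker ((P - Q + 1 : H →L[ℂ] H) : H →ₗ[ℂ] H) ∧
    FiniteDimensional ℂ (LinearMap.ker (T : LinearMap.range (P : H →ₗ[ℂ] H) →ₗ[ℂ] LinearMap.range (Q : H →ₗ[ℂ] H))) ∧
    FiniteDimensional ℂ ((LinearMap.range (T : LinearMap.range (P : H →ₗ[ℂ] H) →ₗ[ℂ] LinearMap.range (Q : H →ₗ[ℂ] H)))ᗮ) ∧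
    (Module.finrank ℂ (LinearMap.ker (T : LinearMap.range (P : H →ₗ[ℂ] H) →ₗ[ℂ] LinearMap.range (Q : H →ₗ[ℂ] H))) : ℤ) -
      (Module.finrank ℂ ((LinearMap.range (T : LinearMap.range (P : H →ₗ[ℂ] H) →ₗ[ℂ] LinearMap.range (Q : H →ₗ[ℂ] H)))ᗮ) : ℤ) =
    (Module.finrank ℂ (LinearMap.ker ((P - Q - 1 : H →L[ℂ] H) : H →ₗ[ℂ] H)) : ℤ) -
      (Module.finrank ℂ (LinearMap.ker ((P - Q + 1 : H →L[ℂ] H) : H →ₗ[ℂ] H)) : ℤ) := by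
  classical
  set M : Submodule ℂ H := LinearMap.ker ((P - Q - 1 : H →L[ℂ] H) : H →ₗ[ℂ] H) with hMdef'
  set M' : Submodule ℂ H := LinearMap.ker ((P - Q + 1 : H →L[ℂ] H) : H →ₗ[ℂ] H) with hM'def'
  -- range membership characterizations
  have hmemP : ∀ x : H, x ∈ LinearMap.range (P : H →ₗ[ℂ] H) ↔ P x = x := by
    intro x
    constructor
    · rintro ⟨y, rfl⟩
      rw [ContinuousLinearMap.coe_coe, ← ContinuousLinearMap.mul_apply, hP]
    · intro h
      exact ⟨x, h⟩
  have hmemQ : ∀ x : H, x ∈ LinearMap.range (Q : H →ₗ[ℂ] H) ↔ Q x = x := by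
    intro x
    constructor
    · rintro ⟨y, rfl⟩
      rw [ContinuousLinearMap.coe_coe, ← ContinuousLinearMap.mul_apply, hQ]
    · intro h
      exact ⟨x, h⟩
  -- adjoint moves
  have hPadj : ContinuousLinearMap.adjoint P = P := by
    rw [← ContinuousLinearMap.star_eq_adjoint]; exact hP'
  have hQadj : ContinuousLinearMap.adjoint Q = Q := by
    rw [← ContinuousLinearMap.star_eq_adjoint]; exact hQ'
  have hinnerP : ∀ v w : H, ⟪P v, w⟫ = ⟪v, P w⟫ := by
    intro v w
    rw [← hPadj, ContinuousLinearMap.adjoint_inner_left, hPadj]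
  have hinnerQ : ∀ v w : H, ⟪Q v, w⟫ = ⟪v, Q w⟫ := by
    intro v w
    rw [← hQadj, ContinuousLinearMap.adjoint_inner_left, hQadj]
  -- eigenspace characterizations
  have hchar1 : ∀ x : H, x ∈ M ↔ P x = x ∧ Q x = 0 := by
    intro x
    rw [hMdef', LinearMap.mem_ker, ContinuousLinearMap.coe_coe]
    have h0 : (P - Q - 1) x = (P - Q) x - x := by simp
    rw [h0, sub_eq_zero]
    exact aux_eig_char P Q hP hP' hQ hQ' x
  have hchar2 : ∀ x : H, x ∈ M' ↔ Q x = x ∧ P x = 0 := by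
    intro x
    rw [hM'def', LinearMap.mem_ker, ContinuousLinearMap.coe_coe]
    have h0 : (P - Q + 1) x = -((Q - P) x - x) := by
      simp only [ContinuousLinearMap.sub_apply, ContinuousLinearMap.add_apply,
        ContinuousLinearMap.one_apply]
      abel
    rw [h0, neg_eq_zero, sub_eq_zero]
    exact aux_eig_char Q P hQ hQ' hP hP' x
  -- finite dimensionality of the eigenspaces
  haveI hMfin : FiniteDimensional ℂ M := aux_findim_ker (P - Q) hcomp
  haveI hM'fin : FiniteDimensional ℂ M' := by
    have hcomp' : IsCompactOperator ⇑(Q - P) := by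
      have h1 : ⇑(Q - P) = fun x => -((P - Q) x) := by
        ext x
        simp only [ContinuousLinearMap.sub_apply]
        abel
      rw [h1]
      exact hcomp.neg
    have hkerEq : LinearMap.ker ((Q - P - 1 : H →L[ℂ] H) : H →ₗ[ℂ] H) = M' := by
      ext x
      rw [hM'def', LinearMap.mem_ker, LinearMap.mem_ker, ContinuousLinearMap.coe_coe, ContinuousLinearMap.coe_coe]
      have h0 : (Q - P - 1) x = -((P - Q + 1) x) := by
        simp only [ContinuousLinearMap.sub_apply, ContinuousLinearMap.add_apply,
          ContinuousLinearMap.one_apply]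
        abel
      rw [h0, neg_eq_zero]
    have := aux_findim_ker (Q - P) hcomp'
    rwa [hkerEq] at this
  -- Part 1 : kernel identification
  have part1 : (LinearMap.ker (T : LinearMap.range (P : H →ₗ[ℂ] H) →ₗ[ℂ] LinearMap.range (Q : H →ₗ[ℂ] H))).map (LinearMap.range (P : H →ₗ[ℂ] H)).subtype = M := by
    ext x
    simp only [Submodule.mem_map]
    constructor
    · rintro ⟨⟨x, hx⟩, hker, rfl⟩
      rw [LinearMap.mem_ker, ContinuousLinearMap.coe_coe] at hker
      have hQx : Q x = 0 := by
        have h1 := hT ⟨x, hx⟩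
        rw [hker] at h1
        simpa using h1.symm
      exact (hchar1 x).mpr ⟨(hmemP x).mp hx, hQx⟩
    · intro hx
      obtain ⟨h1, h2⟩ := (hchar1 x).mp hx
      refine ⟨⟨x, (hmemP x).mpr h1⟩, ?_, rfl⟩
      rw [LinearMap.mem_ker]
      apply Subtype.ext
      have h3 := hT ⟨x, (hmemP x).mpr h1⟩
      rw [h2] at h3
      simpa using h3
  -- Part 3 : cokernel identification
  have part3 : ((LinearMap.range (T : LinearMap.range (P : H →ₗ[ℂ] H) →ₗ[ℂ] LinearMap.range (Q : H →ₗ[ℂ] H)))ᗮ).map (LinearMap.range (Q : H →ₗ[ℂ] H)).subtype = M' := by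
    ext y
    simp only [Submodule.mem_map]
    constructor
    · rintro ⟨⟨y, hy⟩, hmem, rfl⟩
      have hQy : Q y = y := (hmemQ y).mp hy
      have hPy : P y = 0 := by
        have key : ∀ v : H, ⟪v, P y⟫ = 0 := by
          intro v
          have hPv : P v ∈ LinearMap.range (P : H →ₗ[ℂ] H) := ⟨v, rfl⟩
          have h1 := (Submodule.mem_orthogonal _ _).mp hmem (T ⟨P v, hPv⟩)
            (LinearMap.mem_range_self _ _)
          rw [Submodule.coe_inner, hT ⟨P v, hPv⟩] at h1
          -- h1 : ⟪Q (P v), y⟫ = 0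
          rw [hinnerQ, hQy, hinnerP] at h1
          exact h1
        have := key (P y)
        exact inner_self_eq_zero.mp this
      exact (hchar2 y).mpr ⟨hQy, hPy⟩
    · intro hy
      obtain ⟨h1, h2⟩ := (hchar2 y).mp hy
      refine ⟨⟨y, (hmemQ y).mpr h1⟩, ?_, rfl⟩
      rw [Submodule.mem_orthogonal]
      rintro w hw
      obtain ⟨x, rfl⟩ := hw
      rw [Submodule.coe_inner, ContinuousLinearMap.coe_coe, hT x]
      have hx : P (x : H) = x := (hmemP _).mp x.2
      calc ⟪Q (x : H), y⟫ = ⟪(x : H), Q y⟫ := hinnerQ _ _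
        _ = ⟪P (x : H), y⟫ := by rw [h1, hx]
        _ = ⟪(x : H), P y⟫ := hinnerP _ _
        _ = 0 := by rw [h2, inner_zero_right]
  -- bounded below on the orthogonal complement of M
  obtain ⟨c, hc, hbb⟩ := aux_bounded_below P Q hcomp M (by
    intro x
    rw [hMdef', LinearMap.mem_ker, ContinuousLinearMap.coe_coe]
    have h0 : (P - Q - 1) x = (P - Q) x - x := by simp
    rw [h0, sub_eq_zero])
  -- closedness of ranges of P and Q
  have hRPclosed : IsClosed ((LinearMap.range (P : H →ₗ[ℂ] H) : Submodule ℂ H) : Set H) := by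
    have h1 : (LinearMap.range (P : H →ₗ[ℂ] H) : Submodule ℂ H) = LinearMap.ker ((1 - P : H →L[ℂ] H) : H →ₗ[ℂ] H) := by
      ext x
      rw [hmemP x, LinearMap.mem_ker, ContinuousLinearMap.coe_coe]
      simp only [ContinuousLinearMap.sub_apply, ContinuousLinearMap.one_apply]
      rw [sub_eq_zero, eq_comm]
    rw [h1]
    exact ContinuousLinearMap.isClosed_ker (1 - P)
  have hRQclosed : IsClosed ((LinearMap.range (Q : H →ₗ[ℂ] H) : Submodule ℂ H) : Set H) := by
    have h1 : (LinearMap.range (Q : H →ₗ[ℂ] H) : Submodule ℂ H) = LinearMap.ker ((1 - Q : H →L[ℂ] H) : H →ₗ[ℂ] H) := by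
      ext x
      rw [hmemQ x, LinearMap.mem_ker, ContinuousLinearMap.coe_coe]
      simp only [ContinuousLinearMap.sub_apply, ContinuousLinearMap.one_apply]
      rw [sub_eq_zero, eq_comm]
    rw [h1]
    exact ContinuousLinearMap.isClosed_ker (1 - Q)
  -- the complement of M inside range P
  set E : Submodule ℂ H := (LinearMap.range (P : H →ₗ[ℂ] H)) ⊓ Mᗮ with hEdef
  have hEclosed : IsClosed (E : Set H) := by
    rw [hEdef, Submodule.coe_inf]
    exact hRPclosed.inter (Submodule.isClosed_orthogonal M)
  haveI : CompleteSpace E := hEclosed.completeSpace_coe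
  set f : E →L[ℂ] H := Q.comp (Submodule.subtypeL E) with hfdef
  have hfange : AntilipschitzWith (⟨c, hc.le⟩ : NNReal)⁻¹ f := by
    apply f.antilipschitz_of_bound
    intro x
    have hx1 : P (x : H) = x := (hmemP _).mp x.2.1
    have hx2 : (x : H) ∈ Mᗮ := x.2.2
    have h1 := hbb x hx1 hx2
    have hfx : ‖f x‖ = ‖Q (x : H)‖ := rfl
    have hxn : ‖x‖ = ‖(x : H)‖ := rfl
    rw [hfx, hxn]
    show ‖(x : H)‖ ≤ (c⁻¹ : ℝ) * ‖Q (x : H)‖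
    rw [inv_mul_eq_div, le_div_iff₀ hc]
    linarith
  have hfclosed : IsClosed (Set.range f) := hfange.isClosed_range f.uniformContinuous
  -- decomposition: Q(range P) = Q(E)
  have hmapEq : Submodule.map (Q : H →ₗ[ℂ] H) (LinearMap.range (P : H →ₗ[ℂ] H)) = Submodule.map (Q : H →ₗ[ℂ] H) E := by
    apply le_antisymm
    · rintro _ ⟨x, hx, rfl⟩
      obtain ⟨m, hm, e, he, rfl⟩ := M.exists_add_mem_mem_orthogonal x
      obtain ⟨hPm, hQm⟩ := (hchar1 m).mp hm
      refine ⟨e, ⟨?_, he⟩, ?_⟩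
      · have hmR : m ∈ LinearMap.range (P : H →ₗ[ℂ] H) := (hmemP m).mpr hPm
        have h2 : e = (m + e) - m := by abel
        rw [h2]
        exact Submodule.sub_mem _ hx hmR
      · rw [map_add, ContinuousLinearMap.coe_coe, hQm, zero_add]
    · exact Submodule.map_mono inf_le_left
  have hsetEq : ((Submodule.map (Q : H →ₗ[ℂ] H) (LinearMap.range (P : H →ₗ[ℂ] H)) : Submodule ℂ H) : Set H) =
      Set.range f := by
    rw [hmapEq]
    ext z
    simp only [SetLike.mem_coe, Submodule.mem_map, Set.mem_range]
    constructor
    · rintro ⟨x, hx, rfl⟩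
      exact ⟨⟨x, hx⟩, rfl⟩
    · rintro ⟨x, rfl⟩
      exact ⟨(x : H), x.2, rfl⟩
  have hclosedH : IsClosed ((Submodule.map (Q : H →ₗ[ℂ] H) (LinearMap.range (P : H →ₗ[ℂ] H)) : Submodule ℂ H) : Set H) := by
    rw [hsetEq]; exact hfclosed
  -- identify the range of T inside H
  have hmapT : (LinearMap.range (T : LinearMap.range (P : H →ₗ[ℂ] H) →ₗ[ℂ] LinearMap.range (Q : H →ₗ[ℂ] H))).map (LinearMap.range (Q : H →ₗ[ℂ] H)).subtype =
      Submodule.map (Q : H →ₗ[ℂ] H) (LinearMap.range (P : H →ₗ[ℂ] H)) := by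
    ext y
    simp only [Submodule.mem_map]
    constructor
    · rintro ⟨w, ⟨x, rfl⟩, rfl⟩
      exact ⟨(x : H), x.2, (hT x).symm⟩
    · rintro ⟨x, hx, rfl⟩
      exact ⟨T ⟨x, hx⟩, LinearMap.mem_range_self _ _, hT ⟨x, hx⟩⟩
  -- Part 2 : closed range
  have part2 : IsClosed ((LinearMap.range (T : LinearMap.range (P : H →ₗ[ℂ] H) →ₗ[ℂ] LinearMap.range (Q : H →ₗ[ℂ] H)) : Submodule ℂ (LinearMap.range (Q : H →ₗ[ℂ] H))) :
      Set (LinearMap.range (Q : H →ₗ[ℂ] H))) := by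
    have hemb := hRQclosed.isClosedEmbedding_subtypeVal
    rw [hemb.isClosed_iff_image_isClosed]
    have himg : Subtype.val '' ((LinearMap.range (T : LinearMap.range (P : H →ₗ[ℂ] H) →ₗ[ℂ] LinearMap.range (Q : H →ₗ[ℂ] H)) : Submodule ℂ (LinearMap.range (Q : H →ₗ[ℂ] H))) :
        Set (LinearMap.range (Q : H →ₗ[ℂ] H))) =
        ((Submodule.map (Q : H →ₗ[ℂ] H) (LinearMap.range (P : H →ₗ[ℂ] H)) : Submodule ℂ H) : Set H) := by
      rw [← hmapT]
      ext z
      simp [Submodule.mem_map]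
    exact himg ▸ hclosedH
  -- linear equivalences
  have e1 : (LinearMap.ker (T : LinearMap.range (P : H →ₗ[ℂ] H) →ₗ[ℂ] LinearMap.range (Q : H →ₗ[ℂ] H))) ≃ₗ[ℂ] M :=
    (Submodule.equivMapOfInjective ((LinearMap.range (P : H →ₗ[ℂ] H)).subtype)
      (Submodule.injective_subtype _) (LinearMap.ker (T : LinearMap.range (P : H →ₗ[ℂ] H) →ₗ[ℂ] LinearMap.range (Q : H →ₗ[ℂ] H)))).trans (LinearEquiv.ofEq _ _ part1)
  have e2 : ((LinearMap.range (T : LinearMap.range (P : H →ₗ[ℂ] H) →ₗ[ℂ] LinearMap.range (Q : H →ₗ[ℂ] H)))ᗮ) ≃ₗ[ℂ] M' :=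
    (Submodule.equivMapOfInjective ((LinearMap.range (Q : H →ₗ[ℂ] H)).subtype)
      (Submodule.injective_subtype _) ((LinearMap.range (T : LinearMap.range (P : H →ₗ[ℂ] H) →ₗ[ℂ] LinearMap.range (Q : H →ₗ[ℂ] H)))ᗮ)).trans (LinearEquiv.ofEq _ _ part3)
  haveI hfin1 : FiniteDimensional ℂ (LinearMap.ker (T : LinearMap.range (P : H →ₗ[ℂ] H) →ₗ[ℂ] LinearMap.range (Q : H →ₗ[ℂ] H))) := Module.Finite.equiv e1.symm
  haveI hfin2 : FiniteDimensional ℂ ((LinearMap.range (T : LinearMap.range (P : H →ₗ[ℂ] H) →ₗ[ℂ] LinearMap.range (Q : H →ₗ[ℂ] H)))ᗮ) := Module.Finite.equiv e2.symm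
  refine ⟨part1, part2, part3, hfin1, hfin2, ?_⟩
  rw [e1.finrank_eq, e2.finrank_eq]
end

section
/- Let A and B be bounded linear operators on a complex Hilbert space H such that B − A is compact. Let Γ be a circle in the complex plane (with given center c and radius r > 0) that does not meet the spectrum of A nor the spectrum of B, and define the Riesz projections P = (2πi)^{−1} ∮_Γ (zI − A)^{−1} dz and Q = (2πi)^{−1} ∮_Γ (zI − B)^{−1} dz (contour integrals over the positively oriented circle). Then P − Q is a compact operator. -/
open MeasureTheory intervalIntegral

/-- An interval integral of a continuous family of compact operators is compact. -/
lemma integral_isCompactOperator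
    {H : Type*} [NormedAddCommGroup H] [NormedSpace ℂ H] [CompleteSpace H]
    {f : ℝ → (H →L[ℂ] H)} (hc : Continuous f)
    (hcpt : ∀ θ, IsCompactOperator ⇑(f θ)) {a b : ℝ} (hab : a < b) :
    IsCompactOperator ⇑(∫ θ in a..b, f θ) := by
  set S : Set (H →L[ℂ] H) := {T | IsCompactOperator ⇑T} with hS
  have hconv : Convex ℝ S := by
    intro x hx y hy p q hp hq hpq
    have h := (hx.smul p).add (hy.smul q)
    have : ⇑(p • x + q • y) = p • ⇑x + q • ⇑y := by ext v; simp
    simpa [hS, Set.mem_setOf_eq, this] using h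
  have hclosed : IsClosed S := isClosed_setOf_isCompactOperator
  rw [intervalIntegral.integral_of_le hab.le]
  have hμ0 : (volume : Measure ℝ) (Set.Ioc a b) ≠ 0 := by
    simp [Real.volume_Ioc, hab]
  have hμt : (volume : Measure ℝ) (Set.Ioc a b) ≠ ⊤ := by
    simp [Real.volume_Ioc]
  have hfi : IntegrableOn f (Set.Ioc a b) := hc.integrableOn_Ioc
  have havg : (⨍ θ in Set.Ioc a b, f θ) ∈ S :=
    hconv.set_average_mem hclosed hμ0 hμt
      (Filter.Eventually.of_forall (fun θ => hcpt θ)) hfi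
  have key := measure_smul_setAverage (μ := volume) f hμt
  rw [← key]
  exact havg.smul _

/-- Let `A, B` be bounded operators on a complex Hilbert
space with `B - A` compact. Let `Γ` be the circle of center `c` and radius
`r > 0` avoiding the spectra of `A` and `B`, and let
`P = (2πi)⁻¹ ∮_Γ (z - A)⁻¹ dz`, `Q = (2πi)⁻¹ ∮_Γ (z - B)⁻¹ dz` be the Riesz
projections (contour integrals over the positively oriented circle). Then
`P - Q` is a compact operator. -/
theorem riesz_projection_difference_compact
    {H : Type*} [NormedAddCommGroup H] [InnerProductSpace ℂ H] [CompleteSpace H]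
    (A B : H →L[ℂ] H)
    (hAB : IsCompactOperator ⇑(B - A))
    (c : ℂ) (r : ℝ) (hr : 0 < r)
    (hΓ : ∀ z : ℂ, ‖z - c‖ = r →
      z ∉ spectrum ℂ A ∧ z ∉ spectrum ℂ B)
    (P Q : H →L[ℂ] H)
    (hPdef : P = (2 * Real.pi * Complex.I)⁻¹ •
      ∫ θ in (0 : ℝ)..(2 * Real.pi),
        (Complex.I * r * Complex.exp (θ * Complex.I)) •
          Ring.inverse
            ((c + r * Complex.exp (θ * Complex.I)) • (1 : H →L[ℂ] H) - A))
    (hQdef : Q = (2 * Real.pi * Complex.I)⁻¹ •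
      ∫ θ in (0 : ℝ)..(2 * Real.pi),
        (Complex.I * r * Complex.exp (θ * Complex.I)) •
          Ring.inverse
            ((c + r * Complex.exp (θ * Complex.I)) • (1 : H →L[ℂ] H) - B)) :
    IsCompactOperator ⇑(P - Q) := by
  set z : ℝ → ℂ := fun θ => c + r * Complex.exp (θ * Complex.I) with hz
  -- each point of the circle is outside both spectra, hence gives units
  have habs : ∀ θ : ℝ, ‖z θ - c‖ = r := by
    intro θ
    simp [hz, Complex.norm_exp, mul_comm, abs_of_pos hr]
  have hAunit : ∀ θ : ℝ, IsUnit ((z θ) • (1 : H →L[ℂ] H) - A) := by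
    intro θ
    have := (hΓ (z θ) (habs θ)).1
    rw [spectrum.notMem_iff] at this
    simpa [Algebra.algebraMap_eq_smul_one] using this
  have hBunit : ∀ θ : ℝ, IsUnit ((z θ) • (1 : H →L[ℂ] H) - B) := by
    intro θ
    have := (hΓ (z θ) (habs θ)).2
    rw [spectrum.notMem_iff] at this
    simpa [Algebra.algebraMap_eq_smul_one] using this
  set fA : ℝ → (H →L[ℂ] H) := fun θ =>
    (Complex.I * r * Complex.exp (θ * Complex.I)) •
      Ring.inverse ((z θ) • (1 : H →L[ℂ] H) - A) with hfA
  set fB : ℝ → (H →L[ℂ] H) := fun θ =>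
    (Complex.I * r * Complex.exp (θ * Complex.I)) •
      Ring.inverse ((z θ) • (1 : H →L[ℂ] H) - B) with hfB
  -- continuity
  have hzc : Continuous z := by
    apply continuous_const.add
    exact continuous_const.mul (Complex.continuous_exp.comp
      ((Complex.continuous_ofReal.mul continuous_const)))
  have hresA : Continuous fun θ => Ring.inverse ((z θ) • (1 : H →L[ℂ] H) - A) := by
    rw [continuous_iff_continuousAt]
    intro θ
    have hcont : Continuous fun θ => (z θ) • (1 : H →L[ℂ] H) - A :=
      (hzc.smul continuous_const).sub continuous_const
    obtain ⟨u, hu⟩ := hAunit θ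
    have h1 : ContinuousAt Ring.inverse ((z θ) • (1 : H →L[ℂ] H) - A) := by
      rw [← hu]; exact NormedRing.inverse_continuousAt u
    exact ContinuousAt.comp (f := fun θ => (z θ) • (1 : H →L[ℂ] H) - A) h1 hcont.continuousAt
  have hresB : Continuous fun θ => Ring.inverse ((z θ) • (1 : H →L[ℂ] H) - B) := by
    rw [continuous_iff_continuousAt]
    intro θ
    have hcont : Continuous fun θ => (z θ) • (1 : H →L[ℂ] H) - B :=
      (hzc.smul continuous_const).sub continuous_const
    obtain ⟨u, hu⟩ := hBunit θ
    have h1 : ContinuousAt Ring.inverse ((z θ) • (1 : H →L[ℂ] H) - B) := by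
      rw [← hu]; exact NormedRing.inverse_continuousAt u
    exact ContinuousAt.comp (f := fun θ => (z θ) • (1 : H →L[ℂ] H) - B) h1 hcont.continuousAt
  have hcoef : Continuous fun θ : ℝ => Complex.I * r * Complex.exp (θ * Complex.I) :=
    continuous_const.mul (Complex.continuous_exp.comp
      (Complex.continuous_ofReal.mul continuous_const))
  have hfAc : Continuous fA := hcoef.smul hresA
  have hfBc : Continuous fB := hcoef.smul hresB
  have hIA : IntervalIntegrable fA volume 0 (2 * Real.pi) := hfAc.intervalIntegrable _ _
  have hIB : IntervalIntegrable fB volume 0 (2 * Real.pi) := hfBc.intervalIntegrable _ _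
  -- pointwise compactness of the difference
  have hcpt : ∀ θ : ℝ, IsCompactOperator ⇑(fA θ - fB θ) := by
    intro θ
    set RA := Ring.inverse ((z θ) • (1 : H →L[ℂ] H) - A) with hRA
    set RB := Ring.inverse ((z θ) • (1 : H →L[ℂ] H) - B) with hRB
    have hdiff : RA - RB = RA * (A - B) * RB := by
      have e1 : RA * ((z θ) • (1 : H →L[ℂ] H) - B) * RB = RA := by
        rw [mul_assoc, Ring.mul_inverse_cancel _ (hBunit θ), mul_one]
      have e2 : RA * ((z θ) • (1 : H →L[ℂ] H) - A) * RB = RB := by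
        rw [Ring.inverse_mul_cancel _ (hAunit θ), one_mul]
      calc RA - RB = RA * ((z θ) • (1 : H →L[ℂ] H) - B) * RB
            - RA * ((z θ) • (1 : H →L[ℂ] H) - A) * RB := by rw [e1, e2]
        _ = RA * (((z θ) • (1 : H →L[ℂ] H) - B) - ((z θ) • (1 : H →L[ℂ] H) - A)) * RB := by
              rw [← sub_mul, ← mul_sub]
        _ = RA * (A - B) * RB := by rw [sub_sub_sub_cancel_left]
    have hABc : IsCompactOperator ⇑(A - B) := by
      have := hAB.neg
      have he : ⇑(A - B) = -⇑(B - A) := by ext v; simp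
      rw [he]; exact this
    have h1 : IsCompactOperator (⇑(A - B) ∘ ⇑RB) := hABc.comp_clm RB
    have h2 : IsCompactOperator (⇑RA ∘ (⇑(A - B) ∘ ⇑RB)) := h1.clm_comp RA
    have h3 : IsCompactOperator ⇑(RA * (A - B) * RB) := by
      have he : ⇑(RA * (A - B) * RB) = ⇑RA ∘ (⇑(A - B) ∘ ⇑RB) := by
        ext v; simp [ContinuousLinearMap.mul_apply]
      rw [he]; exact h2
    have h4 : IsCompactOperator ⇑(RA - RB) := by rw [hdiff]; exact h3
    have h5 := h4.smul (Complex.I * r * Complex.exp (θ * Complex.I))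
    have he : ⇑(fA θ - fB θ)
        = (Complex.I * r * Complex.exp (θ * Complex.I)) • ⇑(RA - RB) := by
      ext v; simp [hfA, hfB, smul_sub, hRA, hRB]
    rw [he]; exact h5
  -- assemble
  have hPQ : P - Q = (2 * Real.pi * Complex.I)⁻¹ •
      ∫ θ in (0:ℝ)..(2 * Real.pi), (fA θ - fB θ) := by
    rw [hPdef, hQdef, ← smul_sub, intervalIntegral.integral_sub hIA hIB]
  rw [hPQ]
  have hint := integral_isCompactOperator (f := fun θ => fA θ - fB θ)
    (hfAc.sub hfBc) hcpt (a := 0) (b := 2 * Real.pi) (by positivity)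
  have h6 := hint.smul ((2 * Real.pi * Complex.I)⁻¹)
  have he : ⇑((2 * Real.pi * Complex.I)⁻¹ • ∫ θ in (0:ℝ)..(2 * Real.pi), (fA θ - fB θ))
      = (2 * Real.pi * Complex.I)⁻¹ •
        ⇑(∫ θ in (0:ℝ)..(2 * Real.pi), (fA θ - fB θ)) := by ext v; simp
  rw [he]; exact h6
end

section
/- Let A and B be n×n Hermitian complex matrices with eigenvalues α₁ ≤ ⋯ ≤ α_n and β₁ ≤ ⋯ ≤ β_n (counted with multiplicity), and let φ : ℝ → ℝ be continuously differentiable. Define ξ(t) = N_A(t) − N_B(t), where N_A(t) = #{j : α_j < t} and N_B(t) = #{j : β_j < t}. Then Tr φ(B) − Tr φ(A) = ∫_ℝ φ′(t) ξ(t) dt, where φ(A) and φ(B) are defined by the functional calculus for Hermitian matrices (applying φ to the eigenvalues in a spectral decomposition). -/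
open scoped MatrixGroups
open MeasureTheory

lemma key_integrable' (g : ℝ → ℝ) (hc : Continuous g) (a b : ℝ) :
    Integrable (fun t => g t * ((if a < t then (1:ℝ) else 0) - (if b < t then 1 else 0))) := by
  have heq : (fun t => g t * ((if a < t then (1:ℝ) else 0) - (if b < t then 1 else 0)))
      = fun t => Set.indicator (Set.Ioc a b) g t - Set.indicator (Set.Ioc b a) g t := by
    funext t
    by_cases h1 : a < t <;> by_cases h2 : b < t <;>
      simp [Set.indicator_apply, Set.mem_Ioc, h1, h2, not_le.mpr, le_of_not_gt]
  rw [heq]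
  exact ((hc.integrableOn_Ioc).integrable_indicator measurableSet_Ioc).sub
    ((hc.integrableOn_Ioc).integrable_indicator measurableSet_Ioc)

lemma key_integral' (φ : ℝ → ℝ) (hφ : ContDiff ℝ 1 φ) (a b : ℝ) :
    (∫ t : ℝ, deriv φ t * ((if a < t then (1:ℝ) else 0) - (if b < t then 1 else 0)))
      = φ b - φ a := by
  have hc : Continuous (deriv φ) := hφ.continuous_deriv le_rfl
  have heq : (fun t => deriv φ t * ((if a < t then (1:ℝ) else 0) - (if b < t then 1 else 0)))
      = fun t => Set.indicator (Set.Ioc a b) (deriv φ) t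
          - Set.indicator (Set.Ioc b a) (deriv φ) t := by
    funext t
    by_cases h1 : a < t <;> by_cases h2 : b < t <;>
      simp [Set.indicator_apply, Set.mem_Ioc, h1, h2, not_le.mpr, le_of_not_gt]
  rw [heq, integral_sub ((hc.integrableOn_Ioc).integrable_indicator measurableSet_Ioc)
      ((hc.integrableOn_Ioc).integrable_indicator measurableSet_Ioc),
    integral_indicator measurableSet_Ioc, integral_indicator measurableSet_Ioc]
  have : (∫ t in Set.Ioc a b, deriv φ t) - ∫ t in Set.Ioc b a, deriv φ t
      = ∫ t in a..b, deriv φ t := rfl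
  rw [this]
  exact intervalIntegral.integral_deriv_eq_sub
    (fun x _ => (hφ.differentiable one_ne_zero).differentiableAt) (hc.intervalIntegrable a b)

/-- **Lifshits–Krein trace formula, finite dimensions.**
Let `A, B` be `n × n` Hermitian matrices with spectral decompositions
`A = U diag(α) U*`, `B = V diag(β) V*` (`U, V` unitary, eigenvalues
`α₁ ≤ ⋯ ≤ αₙ`, `β₁ ≤ ⋯ ≤ βₙ` counted with multiplicity), and let
`φ : ℝ → ℝ` be continuously differentiable. With
`ξ(t) = N_A(t) - N_B(t)`, where `N_A(t) = #{j : α j < t}` and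
`N_B(t) = #{j : β j < t}`, and `φ(A) = U diag(φ ∘ α) U*`,
`φ(B) = V diag(φ ∘ β) V*` given by the functional calculus, one has
`Tr φ(B) - Tr φ(A) = ∫ φ'(t) ξ(t) dt`. -/
theorem trace_formula_finite_dim
    {n : ℕ} (A B U V : Matrix (Fin n) (Fin n) ℂ)
    (hU : U ∈ Matrix.unitaryGroup (Fin n) ℂ)
    (hV : V ∈ Matrix.unitaryGroup (Fin n) ℂ)
    (α β : Fin n → ℝ) (hα : Monotone α) (hβ : Monotone β)
    (hAdecomp : A = U * Matrix.diagonal (fun j => (α j : ℂ)) * star U)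
    (hBdecomp : B = V * Matrix.diagonal (fun j => (β j : ℂ)) * star V)
    (hA : A.IsHermitian) (hB : B.IsHermitian)
    (φ : ℝ → ℝ) (hφ : ContDiff ℝ 1 φ) :
    Matrix.trace (V * Matrix.diagonal (fun j => (φ (β j) : ℂ)) * star V) -
      Matrix.trace (U * Matrix.diagonal (fun j => (φ (α j) : ℂ)) * star U) =
    ((∫ t : ℝ, deriv φ t *
        ((((Finset.univ.filter fun j => α j < t).card : ℤ) -
          ((Finset.univ.filter fun j => β j < t).card : ℤ) : ℤ) : ℝ)) : ℝ) := by
  have hc : Continuous (deriv φ) := hφ.continuous_deriv le_rfl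
  have trV : Matrix.trace (V * Matrix.diagonal (fun j => (φ (β j) : ℂ)) * star V)
      = ∑ j, (φ (β j) : ℂ) := by
    rw [Matrix.trace_mul_cycle, hV.1, Matrix.one_mul, Matrix.trace_diagonal]
  have trU : Matrix.trace (U * Matrix.diagonal (fun j => (φ (α j) : ℂ)) * star U)
      = ∑ j, (φ (α j) : ℂ) := by
    rw [Matrix.trace_mul_cycle, hU.1, Matrix.one_mul, Matrix.trace_diagonal]
  rw [trV, trU]
  have hint : (∫ t : ℝ, deriv φ t *
        ((((Finset.univ.filter fun j => α j < t).card : ℤ) -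
          ((Finset.univ.filter fun j => β j < t).card : ℤ) : ℤ) : ℝ))
      = ∑ j, (φ (β j) - φ (α j)) := by
    have heq : (fun t => deriv φ t *
        ((((Finset.univ.filter fun j => α j < t).card : ℤ) -
          ((Finset.univ.filter fun j => β j < t).card : ℤ) : ℤ) : ℝ))
        = fun t => ∑ j, deriv φ t *
            ((if α j < t then (1:ℝ) else 0) - (if β j < t then 1 else 0)) := by
      funext t
      rw [← Finset.mul_sum]
      congr 1
      rw [Finset.sum_sub_distrib]
      push_cast [Finset.card_filter]
      simp
    rw [heq, integral_finset_sum _ (fun j _ => key_integrable' _ hc _ _)]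
    exact Finset.sum_congr rfl fun j _ => key_integral' φ hφ _ _
  rw [hint]
  push_cast [Finset.sum_sub_distrib]
  norm_cast
end

section
/- Let A and B be self-adjoint linear operators on a finite-dimensional complex inner product space H, and fix λ ∈ ℝ. Let P be the orthogonal projection onto the sum of the eigenspaces of A corresponding to eigenvalues strictly less than λ, and let Q be the orthogonal projection onto the sum of the eigenspaces of B corresponding to eigenvalues strictly less than λ. Then dim Ker(P − Q − I) − dim Ker(P − Q + I) = N_A(λ) − N_B(λ), where N_A(λ) and N_B(λ) denote the number of eigenvalues of A, respectively B, strictly less than λ, counted with multiplicity. -/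
open Module
open scoped ComplexInnerProductSpace


lemma inner_orthogonalProjection_self
    {H : Type*} [NormedAddCommGroup H] [InnerProductSpace ℂ H]
    [FiniteDimensional ℂ H] (K : Submodule ℂ H) (x : H) :
    ⟪(K.orthogonalProjectionOnto x : H), x⟫ = (‖(K.orthogonalProjectionOnto x : H)‖ : ℂ) ^ 2 := by
  have h0 : ⟪x - (K.orthogonalProjectionOnto x : H), (K.orthogonalProjectionOnto x : H)⟫ = 0 :=
    Submodule.starProjection_inner_eq_zero x _ (Submodule.coe_mem _)
  have h1 : ⟪(K.orthogonalProjectionOnto x : H), x - (K.orthogonalProjectionOnto x : H)⟫ = 0 := by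
    rw [← inner_conj_symm, h0, map_zero]
  have h2 : ⟪(K.orthogonalProjectionOnto x : H), x⟫
      = ⟪(K.orthogonalProjectionOnto x : H), (K.orthogonalProjectionOnto x : H)⟫
        + ⟪(K.orthogonalProjectionOnto x : H), x - (K.orthogonalProjectionOnto x : H)⟫ := by
    rw [← inner_add_right, add_sub_cancel]
  rw [h2, h1, add_zero, inner_self_eq_norm_sq_to_K]
  norm_cast

/-- The kernel of `P - Q - 1` is `U ⊓ Wᗮ`, where `P, Q` are the orthogonal
projections onto `U, W`. -/
lemma ker_proj_sub_proj_sub_one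
    {H : Type*} [NormedAddCommGroup H] [InnerProductSpace ℂ H]
    [FiniteDimensional ℂ H] (U W : Submodule ℂ H) :
    LinearMap.ker ((U.subtypeL.comp U.orthogonalProjectionOnto
        - W.subtypeL.comp W.orthogonalProjectionOnto - 1 : H →L[ℂ] H) : H →ₗ[ℂ] H) = U ⊓ Wᗮ := by
  ext x
  simp only [LinearMap.mem_ker, ContinuousLinearMap.coe_coe, ContinuousLinearMap.sub_apply,
    ContinuousLinearMap.one_apply, ContinuousLinearMap.comp_apply,
    Submodule.subtypeL_apply, Submodule.mem_inf, sub_eq_zero]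
  constructor
  · intro h
    -- h : ↑(projU x) - ↑(projW x) = x
    have h' : (U.orthogonalProjectionOnto x : H) = x + (W.orthogonalProjectionOnto x : H) :=
      sub_eq_iff_eq_add.mp h
    have hinner : (⟪(U.orthogonalProjectionOnto x : H), x⟫ : ℂ)
        = ⟪x, x⟫ + ⟪(W.orthogonalProjectionOnto x : H), x⟫ := by
      rw [h', inner_add_left]
    have hU : (⟪(U.orthogonalProjectionOnto x : H), x⟫ : ℂ)
        = (‖(U.orthogonalProjectionOnto x : H)‖ : ℂ) ^ 2 :=
      inner_orthogonalProjection_self U x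
    have hW : (⟪(W.orthogonalProjectionOnto x : H), x⟫ : ℂ)
        = (‖(W.orthogonalProjectionOnto x : H)‖ : ℂ) ^ 2 :=
      inner_orthogonalProjection_self W x
    have hx : (⟪x, x⟫ : ℂ) = (‖x‖ : ℂ) ^ 2 := by
      simp [inner_self_eq_norm_sq_to_K]
    rw [hU, hW, hx] at hinner
    have hreal : (‖(U.orthogonalProjectionOnto x : H)‖ : ℝ) ^ 2
        = ‖x‖ ^ 2 + ‖(W.orthogonalProjectionOnto x : H)‖ ^ 2 := by
      exact_mod_cast hinner
    have hle : ‖(U.orthogonalProjectionOnto x : H)‖ ^ 2 ≤ ‖x‖ ^ 2 := by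
      have := Submodule.norm_sq_eq_add_norm_sq_projection x U
      simp only [Submodule.coe_norm] at this
      nlinarith [sq_nonneg ‖((Uᗮ).orthogonalProjectionOnto x : H)‖]
    have hW0 : (W.orthogonalProjectionOnto x : H) = 0 := by
      have : ‖(W.orthogonalProjectionOnto x : H)‖ ^ 2 ≤ 0 := by linarith
      have : ‖(W.orthogonalProjectionOnto x : H)‖ = 0 := by nlinarith [norm_nonneg (W.orthogonalProjectionOnto x : H)]
      simpa using this
    have hUx : (U.orthogonalProjectionOnto x : H) = x := by
      rw [h', hW0, add_zero]
    constructor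
    · exact Submodule.starProjection_eq_self_iff.mp hUx
    · have : W.orthogonalProjectionOnto x = 0 := by
        ext; simpa using hW0
      exact Submodule.orthogonalProjectionOnto_eq_zero_iff.mp this
  · rintro ⟨hxU, hxW⟩
    rw [show (U.orthogonalProjectionOnto x : H) = x from Submodule.starProjection_eq_self_iff.mpr hxU]
    have : W.orthogonalProjectionOnto x = 0 := Submodule.orthogonalProjectionOnto_eq_zero_iff.mpr hxW
    rw [this]
    simp

/-- Key dimension identity for a pair of subspaces. -/
lemma finrank_inf_orthogonal_sub
    {H : Type*} [NormedAddCommGroup H] [InnerProductSpace ℂ H]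
    [FiniteDimensional ℂ H] (U W : Submodule ℂ H) :
    (finrank ℂ (U ⊓ Wᗮ : Submodule ℂ H) : ℤ) - (finrank ℂ (W ⊓ Uᗮ : Submodule ℂ H) : ℤ)
      = (finrank ℂ U : ℤ) - (finrank ℂ W : ℤ) := by
  -- T : U → W, the orthogonal projection restricted to U
  set T : U →L[ℂ] W := W.orthogonalProjectionOnto.comp U.subtypeL with hT
  set T' : W →L[ℂ] U := U.orthogonalProjectionOnto.comp W.subtypeL with hT'
  -- T' is the adjoint of T
  have hadj : ContinuousLinearMap.adjoint T = T' := by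
    refine ContinuousLinearMap.ext fun y => ?_
    apply ext_inner_right ℂ
    intro x
    rw [ContinuousLinearMap.adjoint_inner_left]
    simp only [hT, hT', ContinuousLinearMap.comp_apply, Submodule.subtypeL_apply]
    rw [Submodule.inner_orthogonalProjectionOnto_eq_of_mem_left, Submodule.inner_orthogonalProjectionOnto_eq_of_mem_right]
  -- ker T ≃ U ⊓ Wᗮ
  have hkerT : LinearMap.ker (T : U →ₗ[ℂ] W) = (U ⊓ Wᗮ).comap U.subtype := by
    ext x
    simp only [LinearMap.mem_ker, ContinuousLinearMap.coe_coe, hT,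
      ContinuousLinearMap.comp_apply, Submodule.subtypeL_apply, Submodule.mem_comap,
      Submodule.mem_inf, Submodule.coe_mem, true_and, Submodule.coe_subtype]
    exact Submodule.orthogonalProjectionOnto_eq_zero_iff
  have hkerT' : LinearMap.ker (T' : W →ₗ[ℂ] U) = (W ⊓ Uᗮ).comap W.subtype := by
    ext x
    simp only [LinearMap.mem_ker, ContinuousLinearMap.coe_coe, hT',
      ContinuousLinearMap.comp_apply, Submodule.subtypeL_apply, Submodule.mem_comap,
      Submodule.mem_inf, Submodule.coe_mem, true_and, Submodule.coe_subtype]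
    exact Submodule.orthogonalProjectionOnto_eq_zero_iff
  have e1 : finrank ℂ (LinearMap.ker (T : U →ₗ[ℂ] W)) = finrank ℂ (U ⊓ Wᗮ : Submodule ℂ H) := by
    rw [hkerT]
    exact LinearEquiv.finrank_eq (Submodule.comapSubtypeEquivOfLe inf_le_left)
  have e2 : finrank ℂ (LinearMap.ker (T' : W →ₗ[ℂ] U)) = finrank ℂ (W ⊓ Uᗮ : Submodule ℂ H) := by
    rw [hkerT']
    exact LinearEquiv.finrank_eq (Submodule.comapSubtypeEquivOfLe inf_le_left)
  -- ranks of T and its adjoint agree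
  have hker_adj : LinearMap.ker ((ContinuousLinearMap.adjoint T : W →L[ℂ] U) : W →ₗ[ℂ] U)
      = (LinearMap.range (T : U →ₗ[ℂ] W))ᗮ := by
    ext y
    simp only [LinearMap.mem_ker, ContinuousLinearMap.coe_coe, Submodule.mem_orthogonal]
    constructor
    · intro h z hz
      obtain ⟨x, rfl⟩ := hz
      rw [ContinuousLinearMap.coe_coe, ← ContinuousLinearMap.adjoint_inner_right, h,
        inner_zero_right]
    · intro h
      apply ext_inner_right ℂ
      intro x
      rw [ContinuousLinearMap.adjoint_inner_left, inner_zero_left]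
      have h2 := h (T x) ⟨x, rfl⟩
      rw [← inner_conj_symm, h2, map_zero]
  have hrank : finrank ℂ (LinearMap.range ((ContinuousLinearMap.adjoint T : W →L[ℂ] U) : W →ₗ[ℂ] U))
      = finrank ℂ (LinearMap.range (T : U →ₗ[ℂ] W)) := by
    have h1 := LinearMap.finrank_range_add_finrank_ker
      ((ContinuousLinearMap.adjoint T : W →L[ℂ] U) : W →ₗ[ℂ] U)
    rw [hker_adj] at h1
    have h2 := Submodule.finrank_add_finrank_orthogonal
      (K := LinearMap.range (T : U →ₗ[ℂ] W))
    omega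
  have r1 := LinearMap.finrank_range_add_finrank_ker (T : U →ₗ[ℂ] W)
  have r2 := LinearMap.finrank_range_add_finrank_ker
    ((ContinuousLinearMap.adjoint T : W →L[ℂ] U) : W →ₗ[ℂ] U)
  rw [hadj] at r2
  rw [hadj] at hrank
  rw [e1] at r1
  rw [e2] at r2
  omega


/-- Let `A, B` be self-adjoint operators on a
finite-dimensional complex inner product space, `λ ∈ ℝ`, and let `P` (resp.
`Q`) be the orthogonal projection onto the sum of the eigenspaces of `A`
(resp. `B`) for eigenvalues strictly less than `λ`. Then
`dim Ker (P - Q - I) - dim Ker (P - Q + I) = N_A(λ) - N_B(λ)`, where `N_A(λ)`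
(resp. `N_B(λ)`) is the number of eigenvalues of `A` (resp. `B`) below `λ`,
counted with multiplicity, i.e. the dimension of the corresponding sum of
eigenspaces. -/
theorem index_of_spectral_projections_eq_counting_difference
    {H : Type*} [NormedAddCommGroup H] [InnerProductSpace ℂ H]
    [FiniteDimensional ℂ H]
    (A B : H →ₗ[ℂ] H) (hA : A.IsSymmetric) (hB : B.IsSymmetric)
    (l : ℝ)
    (SA SB : Submodule ℂ H)
    (hSA : SA = ⨆ μ : {μ : ℝ // μ < l}, Module.End.eigenspace A ((μ : ℝ) : ℂ))
    (hSB : SB = ⨆ μ : {μ : ℝ // μ < l}, Module.End.eigenspace B ((μ : ℝ) : ℂ))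
    (P Q : H →L[ℂ] H)
    (hPdef : P = SA.subtypeL.comp SA.orthogonalProjectionOnto)
    (hQdef : Q = SB.subtypeL.comp SB.orthogonalProjectionOnto) :
    (Module.finrank ℂ (LinearMap.ker ((P - Q - 1 : H →L[ℂ] H) : H →ₗ[ℂ] H)) : ℤ) -
      (Module.finrank ℂ (LinearMap.ker ((P - Q + 1 : H →L[ℂ] H) : H →ₗ[ℂ] H)) : ℤ) =
    (Module.finrank ℂ SA : ℤ) - (Module.finrank ℂ SB : ℤ) := by
  subst hPdef hQdef
  have h1 : LinearMap.ker ((SA.subtypeL.comp SA.orthogonalProjectionOnto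
      - SB.subtypeL.comp SB.orthogonalProjectionOnto - 1 : H →L[ℂ] H) : H →ₗ[ℂ] H) = SA ⊓ SBᗮ :=
    ker_proj_sub_proj_sub_one SA SB
  have hneg : (SA.subtypeL.comp SA.orthogonalProjectionOnto
      - SB.subtypeL.comp SB.orthogonalProjectionOnto + 1 : H →L[ℂ] H)
      = -((SB.subtypeL.comp SB.orthogonalProjectionOnto
        - SA.subtypeL.comp SA.orthogonalProjectionOnto - 1 : H →L[ℂ] H)) := by
    abel
  have h2 : LinearMap.ker ((SA.subtypeL.comp SA.orthogonalProjectionOnto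
      - SB.subtypeL.comp SB.orthogonalProjectionOnto + 1 : H →L[ℂ] H) : H →ₗ[ℂ] H) = SB ⊓ SAᗮ := by
    rw [hneg]
    rw [show LinearMap.ker ((-((SB.subtypeL.comp SB.orthogonalProjectionOnto
        - SA.subtypeL.comp SA.orthogonalProjectionOnto - 1 : H →L[ℂ] H)) : H →L[ℂ] H) : H →ₗ[ℂ] H)
      = LinearMap.ker ((SB.subtypeL.comp SB.orthogonalProjectionOnto
        - SA.subtypeL.comp SA.orthogonalProjectionOnto - 1 : H →L[ℂ] H) : H →ₗ[ℂ] H) from ?_]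
    · exact ker_proj_sub_proj_sub_one SB SA
    · ext x
      simp only [LinearMap.mem_ker, ContinuousLinearMap.coe_coe,
        ContinuousLinearMap.neg_apply, neg_eq_zero]
  rw [h1, h2]
  exact finrank_inf_orthogonal_sub SA SB
end
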